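/- Let M be a multi-context system, η a set of integrity constraints over M, and M'' the MCS obtained by adding the context C_0 with ACC_0(∅) = ∅, ACC_0({*}) = {{*}} and the bridge rules obtained from η by adding head (0:*). Then M strongly satisfies η if and only if M is logically consistent and M'' is logically inconsistent. -/
import Mathlib


/-- A ground bridge rule `(i : head) ← pos, not neg` of context `i`:
`pos` and `neg` are sets of pairs `(c, p)` meaning "belief `p` queried in context `c`". -/
structure BridgeRule (ι α : Type*) where
  head : α
  pos : Set (ι × α)
  neg : Set (ι × α)

/-- A ground integrity constraint `← pos, not neg` over an MCS. -/
structure IntegrityConstraint (ι α : Type*) where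
  pos : Set (ι × α)
  neg : Set (ι × α)

/-- A context of an MCS: a logic (given by its semantics `ACC`, mapping each
knowledge base to its set of acceptable belief sets), a knowledge base `kb`,
and a set of bridge rules `br`. -/
structure Context (ι α : Type*) where
  ACC : Set α → Set (Set α)
  kb : Set α
  br : Set (BridgeRule ι α)

/-- A multi-context system: a family of contexts indexed by `ι`. -/
abbrev MCS (ι α : Type*) := ι → Context ι α

/-- A belief state: one belief set per context. -/
abbrev BeliefState (ι α : Type*) := ι → Set α

/-- A bridge rule is applicable in a belief state `S` if every positive body
literal holds in the corresponding belief set and no negative one does. -/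
def BridgeRule.applicable {ι α : Type*} (r : BridgeRule ι α) (S : BeliefState ι α) : Prop :=
  (∀ q ∈ r.pos, q.2 ∈ S q.1) ∧ ∀ q ∈ r.neg, q.2 ∉ S q.1

/-- `app M i S`: the heads of the applicable bridge rules of context `i` w.r.t. `S`. -/
def app {ι α : Type*} (M : MCS ι α) (i : ι) (S : BeliefState ι α) : Set α :=
  {a | ∃ r ∈ (M i).br, r.applicable S ∧ r.head = a}

/-- `S` is an equilibrium of `M` if `S i ∈ ACC_i (kb_i ∪ app_i S)` for every `i`. -/
def IsEquilibrium {ι α : Type*} (M : MCS ι α) (S : BeliefState ι α) : Prop :=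
  ∀ i, S i ∈ (M i).ACC ((M i).kb ∪ app M i S)

/-- Logical consistency: existence of an equilibrium. -/
def LogConsistent {ι α : Type*} (M : MCS ι α) : Prop :=
  ∃ S, IsEquilibrium M S

/-- A belief state satisfies an integrity constraint unless all its positive body
literals hold and all its negative body literals fail. -/
def Satisfies {ι α : Type*} (S : BeliefState ι α) (c : IntegrityConstraint ι α) : Prop :=
  ¬ ((∀ q ∈ c.pos, q.2 ∈ S q.1) ∧ ∀ q ∈ c.neg, q.2 ∉ S q.1)

/-- `M` weakly satisfies `η`: some equilibrium of `M` satisfies every IC in `η`. -/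
def WeakSat {ι α : Type*} (M : MCS ι α) (η : Set (IntegrityConstraint ι α)) : Prop :=
  ∃ S, IsEquilibrium M S ∧ ∀ c ∈ η, Satisfies S c

/-- `M` strongly satisfies `η`: `M` is logically consistent and every
equilibrium of `M` satisfies every IC in `η`. -/
def StrongSat {ι α : Type*} (M : MCS ι α) (η : Set (IntegrityConstraint ι α)) : Prop :=
  LogConsistent M ∧ ∀ S, IsEquilibrium M S → ∀ c ∈ η, Satisfies S c

/-- Relabel a body literal for the extended system (old contexts become `some i`). -/
def liftPair {ι α : Type*} (q : ι × α) : Option ι × α := (some q.1, q.2)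

/-- Lift a bridge rule of `M` to the extended system. -/
def liftRule {ι α : Type*} (r : BridgeRule ι α) : BridgeRule (Option ι) α :=
  ⟨r.head, liftPair '' r.pos, liftPair '' r.neg⟩

/-- The bridge rule `(0 : *) ← body of c` obtained from an integrity constraint `c`. -/
def icRule {ι α : Type*} (star : α) (c : IntegrityConstraint ι α) : BridgeRule (Option ι) α :=
  ⟨star, liftPair '' c.pos, liftPair '' c.neg⟩

/-- The MCS obtained from `M` by adding an extra context `C₀` (index `none`)
with empty knowledge base, semantics `ACC0`, and, for each integrity constraint
in `η`, a bridge rule with head `(0 : *)` and the same body. -/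
def extMCS {ι α : Type*} (M : MCS ι α) (η : Set (IntegrityConstraint ι α))
    (star : α) (ACC0 : Set α → Set (Set α)) : MCS (Option ι) α :=
  fun o => match o with
  | some i => ⟨(M i).ACC, (M i).kb, liftRule '' (M i).br⟩
  | none => ⟨ACC0, ∅, icRule star '' η⟩

lemma lift_applicable {ι α : Type*} (r : BridgeRule ι α) (S' : BeliefState (Option ι) α) :
    (liftRule r).applicable S' ↔ r.applicable (fun i => S' (some i)) := by
  unfold BridgeRule.applicable liftRule
  constructor
  · rintro ⟨h1, h2⟩
    exact ⟨fun q hq => h1 (liftPair q) ⟨q, hq, rfl⟩, fun q hq => h2 (liftPair q) ⟨q, hq, rfl⟩⟩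
  · rintro ⟨h1, h2⟩
    constructor
    · rintro q ⟨p, hp, rfl⟩; exact h1 p hp
    · rintro q ⟨p, hp, rfl⟩; exact h2 p hp

lemma app_ext_some {ι α : Type*} (M : MCS ι α) (η : Set (IntegrityConstraint ι α))
    (star : α) (ACC0 : Set α → Set (Set α)) (i : ι) (S' : BeliefState (Option ι) α) :
    app (extMCS M η star ACC0) (some i) S' = app M i (fun j => S' (some j)) := by
  ext a
  constructor
  · rintro ⟨r', ⟨r, hr, rfl⟩, happ, rfl⟩
    exact ⟨r, hr, (lift_applicable r S').mp happ, rfl⟩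
  · rintro ⟨r, hr, happ, rfl⟩
    exact ⟨liftRule r, ⟨r, hr, rfl⟩, (lift_applicable r S').mpr happ, rfl⟩

lemma icRule_applicable {ι α : Type*} (star : α) (c : IntegrityConstraint ι α)
    (S' : BeliefState (Option ι) α) :
    (icRule star c).applicable S' ↔
      ((∀ q ∈ c.pos, q.2 ∈ S' (some q.1)) ∧ ∀ q ∈ c.neg, q.2 ∉ S' (some q.1)) := by
  unfold BridgeRule.applicable icRule
  constructor
  · rintro ⟨h1, h2⟩
    exact ⟨fun q hq => h1 (liftPair q) ⟨q, hq, rfl⟩, fun q hq => h2 (liftPair q) ⟨q, hq, rfl⟩⟩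
  · rintro ⟨h1, h2⟩
    constructor
    · rintro q ⟨p, hp, rfl⟩; exact h1 p hp
    · rintro q ⟨p, hp, rfl⟩; exact h2 p hp

/-- `M` strongly satisfies `η` iff `M` is logically consistent and
`M''` (the extension of `M` by the context `C₀` with `kb₀ = ∅`, `ACC₀ ∅ = ∅`,
`ACC₀ {*} = {{*}}`, and a bridge rule `(0:*) ← body r` for each `r ∈ η`)
is logically inconsistent. -/
theorem strong_satisfaction_iff_consistent_and_extension_inconsistent
    {ι α : Type*} (M : MCS ι α) (η : Set (IntegrityConstraint ι α))
    (star : α) (ACC0 : Set α → Set (Set α))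
    (hACC0_empty : ACC0 ∅ = ∅) (hACC0_star : ACC0 {star} = {{star}}) :
    StrongSat M η ↔ (LogConsistent M ∧ ¬ LogConsistent (extMCS M η star ACC0)) := by
  constructor
  · rintro ⟨hcons, hsat⟩
    refine ⟨hcons, ?_⟩
    rintro ⟨S', hS'⟩
    set S : BeliefState ι α := fun i => S' (some i) with hSdef
    have hSeq : IsEquilibrium M S := by
      intro i
      have := hS' (some i)
      rwa [show extMCS M η star ACC0 (some i) = ⟨(M i).ACC, (M i).kb, liftRule '' (M i).br⟩ from rfl,
        app_ext_some] at this
    have h0 := hS' none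
    have happ0 : app (extMCS M η star ACC0) none S' ⊆ {star} := by
      rintro a ⟨r, ⟨c, hc, rfl⟩, _, rfl⟩
      rfl
    by_cases hne : (app (extMCS M η star ACC0) none S').Nonempty
    · have heq : app (extMCS M η star ACC0) none S' = {star} :=
        Set.Subset.antisymm happ0 (Set.singleton_subset_iff.mpr
          (by obtain ⟨a, ha⟩ := hne; have := happ0 ha; rwa [this] at ha))
      obtain ⟨a, r, ⟨c, hc, rfl⟩, happ, _⟩ := hne
      have := (icRule_applicable star c S').mp happ
      exact hsat S hSeq c hc this
    · rw [Set.not_nonempty_iff_eq_empty] at hne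
      rw [show (extMCS M η star ACC0 none).kb = ∅ from rfl, hne, Set.empty_union,
        show (extMCS M η star ACC0 none).ACC = ACC0 from rfl, hACC0_empty] at h0
      exact h0
  · rintro ⟨hcons, hincons⟩
    refine ⟨hcons, ?_⟩
    intro S hSeq c hc hviol
    apply hincons
    refine ⟨fun o => match o with | some i => S i | none => {star}, ?_⟩
    intro o
    match o with
    | some i =>
      rw [show extMCS M η star ACC0 (some i) = ⟨(M i).ACC, (M i).kb, liftRule '' (M i).br⟩ from rfl,
        app_ext_some]
      exact hSeq i
    | none =>
      have heq : app (extMCS M η star ACC0) none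
          (fun o => match o with | some i => S i | none => {star}) = {star} := by
        apply Set.Subset.antisymm
        · rintro a ⟨r, ⟨c', hc', rfl⟩, _, rfl⟩; rfl
        · intro a ha
          rw [Set.mem_singleton_iff] at ha
          rw [ha]
          exact ⟨icRule star c, ⟨c, hc, rfl⟩, (icRule_applicable star c _).mpr hviol, rfl⟩
      rw [show (extMCS M η star ACC0 none).kb = ∅ from rfl, heq, Set.empty_union,
        show (extMCS M η star ACC0 none).ACC = ACC0 from rfl, hACC0_star]
      rfl
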